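/- For every ℓ > 0, r > 0 and λ ≥ 0 (the derivative in λ being understood as the right derivative at λ = 0), the partial derivative of p with respect to λ is given by ∂_λ p(ℓ,λ,r) = ℓ · Σ_{N=0}^∞ e^{−λℓ}·(λℓ)^N/N! · P( [0,ℓ] ⊄ C_N and [0,ℓ] ⊆ C_N ∪ [U − (r/2)ℰ, U + (r/2)ℰ] ), where C_N = [−r·E_0, r·E_0] ∪ ⋃_{j=1}^N [U_j − (r/2)E_j, U_j + (r/2)E_j] ∪ [ℓ − r·E_{N+1}, ℓ + r·E_{N+1}] and (U, ℰ) is an additional independent pair with U uniform on [0,ℓ] and ℰ exponential with rate 1. -/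

import Mathlib

open MeasureTheory ProbabilityTheory

/-- The uniform probability measure on `[0,ℓ]` (normalized Lebesgue measure). -/
noncomputable def unifMeasure (ℓ : ℝ) : Measure ℝ :=
  ProbabilityTheory.cond volume (Set.Icc 0 ℓ)

instance (ℓ : ℝ) : IsFiniteMeasure (unifMeasure ℓ) := by
  constructor
  unfold unifMeasure ProbabilityTheory.cond
  rw [Measure.smul_apply, Measure.restrict_apply MeasurableSet.univ, Set.univ_inter,
    smul_eq_mul]
  exact lt_of_le_of_lt (ENNReal.inv_mul_le_one _) ENNReal.one_lt_top

instance : IsProbabilityMeasure (expMeasure 1) :=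
  isProbabilityMeasure_expMeasure one_pos

/-- The region `C_N` of `ℝ` covered in the one-dimensional Boolean model with `N`
interior points at positions `p.1 0, …, p.1 (N−1)` with radii `(r/2)·E_j`, and two
boundary points at `0` and `ℓ` with doubled radii `r·E_0` and `r·E_{N+1}`. -/
def covUnion (ℓ r : ℝ) (N : ℕ) (p : (Fin N → ℝ) × (Fin (N + 2) → ℝ)) : Set ℝ :=
  Set.Icc (-(r * p.2 0)) (r * p.2 0) ∪
    (⋃ j : Fin N,
      Set.Icc (p.1 j - r / 2 * p.2 j.succ.castSucc) (p.1 j + r / 2 * p.2 j.succ.castSucc)) ∪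
    Set.Icc (ℓ - r * p.2 (Fin.last (N + 1))) (ℓ + r * p.2 (Fin.last (N + 1)))

/-- `q_N(ℓ,r)`: the probability that `[0,ℓ]` is fully covered by the Boolean model with
`N` independent uniform interior points and independent exponential ranges. -/
noncomputable def qN (ℓ r : ℝ) (N : ℕ) : ENNReal :=
  ((Measure.pi fun _ : Fin N => unifMeasure ℓ).prod
      (Measure.pi fun _ : Fin (N + 2) => expMeasure 1))
    {p | Set.Icc 0 ℓ ⊆ covUnion ℓ r N p}

/-- `p(ℓ,λ,r) = Σ_N e^{−λℓ}(λℓ)^N/N! · q_N(ℓ,r)`: the probability that `[0,ℓ]` is fully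
covered when the number of interior points is Poisson with mean `λℓ`. -/
noncomputable def pcov (ℓ lam r : ℝ) : ℝ :=
  ∑' N : ℕ, Real.exp (-(lam * ℓ)) * (lam * ℓ) ^ N / (Nat.factorial N) * (qN ℓ r N).toReal

/-- The probability that `[0,ℓ] ⊄ C_N` but `[0,ℓ] ⊆ C_N ∪ [U − (r/2)ℰ, U + (r/2)ℰ]`,
where `(U, ℰ)` is an additional independent pair with `U` uniform on `[0,ℓ]` and `ℰ`
exponential with rate 1. -/
noncomputable def qplusN (ℓ r : ℝ) (N : ℕ) : ENNReal :=
  (((Measure.pi fun _ : Fin N => unifMeasure ℓ).prod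
        (Measure.pi fun _ : Fin (N + 2) => expMeasure 1)).prod
      ((unifMeasure ℓ).prod (expMeasure 1)))
    {p | ¬ Set.Icc 0 ℓ ⊆ covUnion ℓ r N p.1 ∧
      Set.Icc 0 ℓ ⊆ covUnion ℓ r N p.1 ∪
        Set.Icc (p.2.1 - r / 2 * p.2.2) (p.2.1 + r / 2 * p.2.2)}

lemma unif_prob {ℓ : ℝ} (hℓ : 0 < ℓ) : IsProbabilityMeasure (unifMeasure ℓ) := by
  constructor
  unfold unifMeasure ProbabilityTheory.cond
  rw [Measure.smul_apply, Measure.restrict_apply MeasurableSet.univ, Set.univ_inter,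
    smul_eq_mul, Real.volume_Icc]
  rw [ENNReal.inv_mul_cancel]
  · simp [hℓ.le]; positivity
  · exact ENNReal.ofReal_ne_top

lemma cov_closed (ℓ r : ℝ) (N : ℕ) (p : (Fin N → ℝ) × (Fin (N + 2) → ℝ)) :
    IsClosed (covUnion ℓ r N p) :=
  ((isClosed_Icc.union (isClosed_iUnion_of_finite fun _ => isClosed_Icc)).union isClosed_Icc)

lemma icc_sub_closure {ℓ : ℝ} (hℓ : 0 < ℓ) :
    Set.Icc (0:ℝ) ℓ ⊆ closure (Set.Icc (0:ℝ) ℓ ∩ Set.range ((↑) : ℚ → ℝ)) := by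
  have h1 : Set.Ioo (0:ℝ) ℓ ⊆ closure (Set.Icc (0:ℝ) ℓ ∩ Set.range ((↑) : ℚ → ℝ)) := by
    intro x hx
    have := Rat.denseRange_cast (𝕜 := ℝ)
    have h2 := (Dense.open_subset_closure_inter (s := Set.range ((↑) : ℚ → ℝ))
      this isOpen_Ioo) hx
    exact closure_mono (Set.inter_subset_inter_left _ Set.Ioo_subset_Icc_self) h2
  calc Set.Icc (0:ℝ) ℓ = closure (Set.Ioo (0:ℝ) ℓ) := (closure_Ioo hℓ.ne).symm
    _ ⊆ closure (closure (Set.Icc (0:ℝ) ℓ ∩ Set.range ((↑) : ℚ → ℝ))) := closure_mono h1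
    _ = _ := closure_closure

lemma subset_iff_rat {ℓ : ℝ} (hℓ : 0 < ℓ) {C : Set ℝ} (hC : IsClosed C) :
    Set.Icc (0:ℝ) ℓ ⊆ C ↔ ∀ q : ℚ, (q:ℝ) ∈ Set.Icc (0:ℝ) ℓ → (q:ℝ) ∈ C := by
  constructor
  · exact fun h q hq => h hq
  · intro h
    refine (icc_sub_closure hℓ).trans ?_
    rw [← hC.closure_eq]
    refine closure_mono ?_
    rintro x ⟨hx, q, rfl⟩
    exact h q hx

lemma measurable_cover {γ : Type*} [MeasurableSpace γ] {ℓ : ℝ} (hℓ : 0 < ℓ) {C : γ → Set ℝ}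
    (hcl : ∀ p, IsClosed (C p)) (hm : ∀ x : ℝ, MeasurableSet {p | x ∈ C p}) :
    MeasurableSet {p | Set.Icc 0 ℓ ⊆ C p} := by
  have h : {p | Set.Icc 0 ℓ ⊆ C p} =
      ⋂ q : {q : ℚ // (q:ℝ) ∈ Set.Icc (0:ℝ) ℓ}, {p | ((q:ℚ):ℝ) ∈ C p} := by
    ext p
    simp only [Set.mem_iInter, Set.mem_setOf_eq, Subtype.forall]
    exact subset_iff_rat hℓ (hcl p)
  rw [h]
  exact MeasurableSet.iInter fun q => hm _

lemma mem_cov_meas (ℓ r x : ℝ) (N : ℕ) :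
    MeasurableSet {p : (Fin N → ℝ) × (Fin (N+2) → ℝ) | x ∈ covUnion ℓ r N p} := by
  have m2 : ∀ i, Measurable (fun p : (Fin N → ℝ) × (Fin (N+2) → ℝ) => p.2 i) :=
    fun i => (measurable_pi_apply i).comp measurable_snd
  have m1 : ∀ j, Measurable (fun p : (Fin N → ℝ) × (Fin (N+2) → ℝ) => p.1 j) :=
    fun j => (measurable_pi_apply j).comp measurable_fst
  have h : {p : (Fin N → ℝ) × (Fin (N+2) → ℝ) | x ∈ covUnion ℓ r N p} =
      (({p | -(r * p.2 0) ≤ x} ∩ {p | x ≤ r * p.2 0}) ∪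
        ⋃ j : Fin N, ({p : (Fin N → ℝ) × (Fin (N+2) → ℝ) |
            p.1 j - r/2 * p.2 j.succ.castSucc ≤ x} ∩
          {p | x ≤ p.1 j + r/2 * p.2 j.succ.castSucc})) ∪
      ({p | ℓ - r * p.2 (Fin.last (N+1)) ≤ x} ∩ {p | x ≤ ℓ + r * p.2 (Fin.last (N+1))}) := by
    ext p
    simp [covUnion, Set.mem_Icc, Set.mem_union, Set.mem_iUnion]
  rw [h]
  refine MeasurableSet.union (MeasurableSet.union ?_ ?_) ?_
  · exact (measurableSet_le (((m2 0).const_mul r).neg) measurable_const).inter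
      (measurableSet_le measurable_const ((m2 0).const_mul r))
  · refine MeasurableSet.iUnion fun j => ?_
    exact (measurableSet_le ((m1 j).sub ((m2 _).const_mul (r/2))) measurable_const).inter
      (measurableSet_le measurable_const ((m1 j).add ((m2 _).const_mul (r/2))))
  · exact (measurableSet_le ((measurable_const.sub ((m2 _).const_mul r))) measurable_const).inter
      (measurableSet_le measurable_const (measurable_const.add ((m2 _).const_mul r)))

lemma cov_event_meas {ℓ : ℝ} (hℓ : 0 < ℓ) (r : ℝ) (N : ℕ) :
    MeasurableSet {p : (Fin N → ℝ) × (Fin (N+2) → ℝ) | Set.Icc 0 ℓ ⊆ covUnion ℓ r N p} :=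
  measurable_cover hℓ (cov_closed ℓ r N) (fun x => mem_cov_meas ℓ r x N)

lemma covplus_event_meas {ℓ : ℝ} (hℓ : 0 < ℓ) (r : ℝ) (N : ℕ) :
    MeasurableSet {p : ((Fin N → ℝ) × (Fin (N+2) → ℝ)) × (ℝ × ℝ) |
      Set.Icc 0 ℓ ⊆ covUnion ℓ r N p.1 ∪
        Set.Icc (p.2.1 - r / 2 * p.2.2) (p.2.1 + r / 2 * p.2.2)} := by
  refine measurable_cover hℓ (fun p => (cov_closed ℓ r N p.1).union isClosed_Icc) fun x => ?_
  have h : {p : ((Fin N → ℝ) × (Fin (N+2) → ℝ)) × (ℝ × ℝ) |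
      x ∈ covUnion ℓ r N p.1 ∪ Set.Icc (p.2.1 - r / 2 * p.2.2) (p.2.1 + r / 2 * p.2.2)} =
      (Prod.fst ⁻¹' {p : (Fin N → ℝ) × (Fin (N+2) → ℝ) | x ∈ covUnion ℓ r N p}) ∪
      ({p : ((Fin N → ℝ) × (Fin (N+2) → ℝ)) × (ℝ × ℝ) | p.2.1 - r/2 * p.2.2 ≤ x} ∩
        {p | x ≤ p.2.1 + r/2 * p.2.2}) := by
    ext p
    simp [Set.mem_Icc, Set.mem_union]
  rw [h]
  have mu : Measurable (fun p : ((Fin N → ℝ) × (Fin (N+2) → ℝ)) × (ℝ × ℝ) => p.2.1) :=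
    measurable_fst.comp measurable_snd
  have me : Measurable (fun p : ((Fin N → ℝ) × (Fin (N+2) → ℝ)) × (ℝ × ℝ) => p.2.2) :=
    measurable_snd.comp measurable_snd
  exact ((mem_cov_meas ℓ r x N).preimage measurable_fst).union
    ((measurableSet_le (mu.sub (me.const_mul (r/2))) measurable_const).inter
      (measurableSet_le measurable_const (mu.add (me.const_mul (r/2)))))

lemma cov_succ (ℓ r : ℝ) (N : ℕ) (u : Fin N → ℝ) (e : Fin (N+2) → ℝ) (v w : ℝ) :
    covUnion ℓ r (N+1) (Fin.snoc u v, Fin.insertNth ((Fin.last (N+1)).castSucc) w e) =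
      covUnion ℓ r N (u, e) ∪ Set.Icc (v - r/2*w) (v + r/2*w) := by
  set i : Fin (N+3) := (Fin.last (N+1)).castSucc with hi
  have h0 : Fin.insertNth (α := fun _ => ℝ) i w e 0 = e 0 := by
    have h : (0 : Fin (N+3)) = i.succAbove (0 : Fin (N+2)) := by
      rw [Fin.succAbove_of_castSucc_lt]
      · rfl
      · simp [hi, Fin.lt_def]
    rw [h, Fin.insertNth_apply_succAbove]
  have hlast : Fin.insertNth (α := fun _ => ℝ) i w e (Fin.last (N+2)) = e (Fin.last (N+1)) := by
    have h : (Fin.last (N+2)) = i.succAbove (Fin.last (N+1)) := by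
      rw [Fin.succAbove_of_le_castSucc]
      · exact (Fin.succ_last _).symm
      · exact le_refl _
    rw [h, Fin.insertNth_apply_succAbove]
  have hmid : ∀ k : Fin N,
      Fin.insertNth (α := fun _ => ℝ) i w e ((k.castSucc).succ.castSucc) = e (k.succ.castSucc) := by
    intro k
    have h : ((k.castSucc).succ.castSucc : Fin (N+3)) = i.succAbove (k.succ.castSucc) := by
      rw [Fin.succAbove_of_castSucc_lt]
      · exact Fin.ext (by simp)
      · simp only [hi, Fin.lt_def, Fin.coe_castSucc, Fin.val_succ, Fin.val_last]; omega
    rw [h, Fin.insertNth_apply_succAbove]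
  have hnew : Fin.insertNth (α := fun _ => ℝ) i w e ((Fin.last N).succ.castSucc) = w := by
    have h : ((Fin.last N).succ.castSucc : Fin (N+3)) = i := by
      exact Fin.ext (by simp [hi])
    rw [h, Fin.insertNth_apply_same]
  ext x
  simp only [covUnion, Set.mem_union, Set.mem_iUnion, h0, hlast]
  rw [Fin.exists_fin_succ']
  simp only [Fin.snoc_castSucc, Fin.snoc_last, hmid, hnew]
  tauto

lemma mp_snoc {ℓ : ℝ} (hℓ : 0 < ℓ) (N : ℕ) :
    MeasurePreserving (fun q : (Fin N → ℝ) × ℝ => (Fin.snoc q.1 q.2 : Fin (N+1) → ℝ))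
      ((Measure.pi fun _ : Fin N => unifMeasure ℓ).prod (unifMeasure ℓ))
      (Measure.pi fun _ : Fin (N+1) => unifMeasure ℓ) := by
  have h := ((measurePreserving_piFinSuccAbove (fun _ : Fin (N+1) => unifMeasure ℓ)
      (Fin.last N)).symm).comp
    (Measure.measurePreserving_swap (μ := Measure.pi fun _ : Fin N => unifMeasure ℓ)
      (ν := unifMeasure ℓ))
  have heq : ((MeasurableEquiv.piFinSuccAbove (fun _ : Fin (N+1) => ℝ) (Fin.last N)).symm ∘
      Prod.swap) = (fun q : (Fin N → ℝ) × ℝ => (Fin.snoc q.1 q.2 : Fin (N+1) → ℝ)) := by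
    funext q
    simp [MeasurableEquiv.piFinSuccAbove_symm_apply, Fin.insertNthEquiv, Fin.insertNth_last]
  rwa [heq] at h

lemma mp_ins {N : ℕ} :
    MeasurePreserving (fun q : (Fin (N+2) → ℝ) × ℝ =>
        (Fin.insertNth (α := fun _ => ℝ) ((Fin.last (N+1)).castSucc) q.2 q.1))
      ((Measure.pi fun _ : Fin (N+2) => expMeasure 1).prod (expMeasure 1))
      (Measure.pi fun _ : Fin (N+3) => expMeasure 1) := by
  have h := ((measurePreserving_piFinSuccAbove (fun _ : Fin (N+3) => expMeasure 1)
      ((Fin.last (N+1)).castSucc)).symm).comp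
    (Measure.measurePreserving_swap (μ := Measure.pi fun _ : Fin (N+2) => expMeasure 1)
      (ν := expMeasure 1))
  have heq : ((MeasurableEquiv.piFinSuccAbove (fun _ : Fin (N+3) => ℝ)
      ((Fin.last (N+1)).castSucc)).symm ∘ Prod.swap) =
      (fun q : (Fin (N+2) → ℝ) × ℝ =>
        (Fin.insertNth (α := fun _ => ℝ) ((Fin.last (N+1)).castSucc) q.2 q.1)) := by
    funext q
    simp [MeasurableEquiv.piFinSuccAbove_symm_apply, Fin.insertNthEquiv]
  rwa [heq] at h

lemma mp_shuffle {α β γ δ : Type*} [MeasurableSpace α] [MeasurableSpace β] [MeasurableSpace γ]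
    [MeasurableSpace δ] (μa : Measure α) (μb : Measure β) (μc : Measure γ) (μd : Measure δ)
    [SFinite μa] [SFinite μb] [SFinite μc] [SFinite μd] :
    MeasurePreserving (fun p : (α × β) × (γ × δ) => ((p.1.1, p.2.1), (p.1.2, p.2.2)))
      ((μa.prod μb).prod (μc.prod μd)) ((μa.prod μc).prod (μb.prod μd)) := by
  have h1 := measurePreserving_prodAssoc μa μb (μc.prod μd)
  have h2 := (measurePreserving_prodAssoc μb μc μd).symm MeasurableEquiv.prodAssoc
  have h3 := (MeasurePreserving.id μa).prod h2
  have h4 := (MeasurePreserving.id μa).prod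
    ((Measure.measurePreserving_swap (μ := μb) (ν := μc)).prod (MeasurePreserving.id μd))
  have h5 := (MeasurePreserving.id μa).prod (measurePreserving_prodAssoc μc μb μd)
  have h6 := (measurePreserving_prodAssoc μa μc (μb.prod μd)).symm MeasurableEquiv.prodAssoc
  exact h6.comp (h5.comp (h4.comp (h3.comp h1)))

lemma mp_phi {ℓ : ℝ} (hℓ : 0 < ℓ) (N : ℕ) :
    MeasurePreserving
      (fun p : ((Fin N → ℝ) × (Fin (N+2) → ℝ)) × (ℝ × ℝ) =>
        ((Fin.snoc p.1.1 p.2.1 : Fin (N+1) → ℝ),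
          Fin.insertNth (α := fun _ => ℝ) ((Fin.last (N+1)).castSucc) p.2.2 p.1.2))
      (((Measure.pi fun _ : Fin N => unifMeasure ℓ).prod
          (Measure.pi fun _ : Fin (N+2) => expMeasure 1)).prod
        ((unifMeasure ℓ).prod (expMeasure 1)))
      ((Measure.pi fun _ : Fin (N+1) => unifMeasure ℓ).prod
        (Measure.pi fun _ : Fin (N+3) => expMeasure 1)) := by
  have h1 := mp_shuffle (Measure.pi fun _ : Fin N => unifMeasure ℓ)
    (Measure.pi fun _ : Fin (N+2) => expMeasure 1) (unifMeasure ℓ) (expMeasure 1)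
  have h2 := (mp_snoc hℓ N).prod (mp_ins (N := N))
  exact h2.comp h1

lemma qN_succ {ℓ : ℝ} (r : ℝ) (hℓ : 0 < ℓ) (N : ℕ) :
    qN ℓ r (N+1) = qN ℓ r N + qplusN ℓ r N := by
  haveI := unif_prob hℓ
  have hφ := mp_phi hℓ N
  have hS := cov_event_meas hℓ r (N+1)
  rw [qN, ← hφ.measure_preimage hS.nullMeasurableSet]
  have hpre : ((fun p : ((Fin N → ℝ) × (Fin (N+2) → ℝ)) × (ℝ × ℝ) =>
        ((Fin.snoc p.1.1 p.2.1 : Fin (N+1) → ℝ),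
          Fin.insertNth (α := fun _ => ℝ) ((Fin.last (N+1)).castSucc) p.2.2 p.1.2)) ⁻¹'
      {p | Set.Icc 0 ℓ ⊆ covUnion ℓ r (N+1) p}) =
      {p : ((Fin N → ℝ) × (Fin (N+2) → ℝ)) × (ℝ × ℝ) |
        Set.Icc 0 ℓ ⊆ covUnion ℓ r N p.1 ∪
          Set.Icc (p.2.1 - r / 2 * p.2.2) (p.2.1 + r / 2 * p.2.2)} := by
    ext p
    simp only [Set.mem_preimage, Set.mem_setOf_eq, cov_succ]
  rw [hpre]
  set M := ((Measure.pi fun _ : Fin N => unifMeasure ℓ).prod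
      (Measure.pi fun _ : Fin (N+2) => expMeasure 1)).prod
    ((unifMeasure ℓ).prod (expMeasure 1)) with hM
  set E := {p : (Fin N → ℝ) × (Fin (N+2) → ℝ) | Set.Icc 0 ℓ ⊆ covUnion ℓ r N p} with hE
  have hEm := cov_event_meas hℓ r N
  set F := {p : ((Fin N → ℝ) × (Fin (N+2) → ℝ)) × (ℝ × ℝ) |
      Set.Icc 0 ℓ ⊆ covUnion ℓ r N p.1 ∪
        Set.Icc (p.2.1 - r / 2 * p.2.2) (p.2.1 + r / 2 * p.2.2)} with hF
  rw [← measure_inter_add_diff F (hEm.prod MeasurableSet.univ)]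
  congr 1
  · have h1 : F ∩ (E ×ˢ Set.univ) = E ×ˢ Set.univ := by
      apply Set.inter_eq_self_of_subset_right
      rintro ⟨p1, p2⟩ ⟨h1, -⟩
      exact fun x hx => Set.mem_union_left _ (h1 hx)
    rw [h1, Measure.prod_prod, measure_univ, mul_one]
    rfl
  · have h2 : F \ (E ×ˢ Set.univ) =
        {p : ((Fin N → ℝ) × (Fin (N+2) → ℝ)) × (ℝ × ℝ) |
          ¬ Set.Icc 0 ℓ ⊆ covUnion ℓ r N p.1 ∧
            Set.Icc 0 ℓ ⊆ covUnion ℓ r N p.1 ∪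
              Set.Icc (p.2.1 - r / 2 * p.2.2) (p.2.1 + r / 2 * p.2.2)} := by
      ext p
      simp only [Set.mem_diff, Set.mem_setOf_eq, Set.mem_prod, Set.mem_univ, and_true, hF, hE]
      tauto
    rw [h2]
    rfl

lemma summable_bxn (b : ℕ → ℝ) (hb : ∀ N, |b N| ≤ 1) (x : ℝ) :
    Summable (fun N : ℕ => b N * x ^ N / N.factorial) := by
  refine Summable.of_norm_bounded (Real.summable_pow_div_factorial |x|) fun n => ?_
  have h : ‖b n * x ^ n / (n.factorial : ℝ)‖ = |b n| * (|x| ^ n / (n.factorial : ℝ)) := by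
    rw [Real.norm_eq_abs, abs_div, abs_mul, abs_pow, Nat.abs_cast, mul_div_assoc]
  rw [h]
  calc |b n| * (|x| ^ n / (n.factorial : ℝ)) ≤ 1 * (|x| ^ n / (n.factorial : ℝ)) := by
        gcongr
        exact hb n
    _ = |x| ^ n / (n.factorial : ℝ) := one_mul _

lemma g_hasDerivAt (b : ℕ → ℝ) (hb : ∀ N, |b N| ≤ 1) (x : ℝ) :
    HasDerivAt (fun y : ℝ => ∑' N : ℕ, b N * y ^ N / N.factorial)
      (∑' N : ℕ, b (N + 1) * x ^ N / N.factorial) x := by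
  set R : ℝ := |x| + 1 with hR
  have hxR : x ∈ Set.Ioo (-R) R := by
    constructor <;> [nlinarith [abs_nonneg x, neg_abs_le x]; nlinarith [le_abs_self x]]
  have hR0 : 0 ≤ R := by positivity
  set u : ℕ → ℝ := fun n => n * R ^ (n - 1) / n.factorial with hu
  have hu_sum : Summable u := by
    rw [← summable_nat_add_iff 1]
    have : (fun n : ℕ => u (n + 1)) = fun n : ℕ => R ^ n / n.factorial := by
      funext n
      rw [hu]
      simp only [Nat.add_sub_cancel, Nat.factorial_succ]
      push_cast
      rw [div_eq_div_iff (by positivity) (by positivity)]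
      ring
    rw [this]
    exact Real.summable_pow_div_factorial R
  have hderiv : ∀ n : ℕ, ∀ y : ℝ, y ∈ Set.Ioo (-R) R →
      HasDerivAt (fun y : ℝ => b n * y ^ n / n.factorial)
        (b n * ((n : ℝ) * y ^ (n - 1)) / n.factorial) y := by
    intro n y _
    exact ((hasDerivAt_pow n y).const_mul (b n)).div_const _
  have hbound : ∀ n : ℕ, ∀ y : ℝ, y ∈ Set.Ioo (-R) R →
      ‖b n * ((n : ℝ) * y ^ (n - 1)) / n.factorial‖ ≤ u n := by
    intro n y hy
    have hyR : |y| ≤ R := by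
      rw [abs_le]; exact ⟨hy.1.le, hy.2.le⟩
    have h : ‖b n * ((n : ℝ) * y ^ (n - 1)) / n.factorial‖ =
        |b n| * ((n : ℝ) * |y| ^ (n - 1)) / n.factorial := by
      rw [Real.norm_eq_abs, abs_div, abs_mul, abs_mul, abs_pow, Nat.abs_cast, Nat.abs_cast]
    rw [h, hu]
    have h1 : |b n| * ((n : ℝ) * |y| ^ (n - 1)) ≤ (n : ℝ) * R ^ (n - 1) := by
      calc |b n| * ((n : ℝ) * |y| ^ (n - 1)) ≤ 1 * ((n : ℝ) * R ^ (n - 1)) := by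
            gcongr
            exact hb n
        _ = (n : ℝ) * R ^ (n - 1) := one_mul _
    exact div_le_div_of_nonneg_right h1 (by positivity) |>.trans (le_refl _)
  have hsum0 : Summable fun n => b n * x ^ n / (n.factorial : ℝ) := summable_bxn b hb x
  have H := hasDerivAt_tsum_of_isPreconnected hu_sum isOpen_Ioo (convex_Ioo _ _).isPreconnected
    hderiv hbound hxR hsum0 hxR
  have hsum' : Summable fun n => b n * ((n : ℝ) * x ^ (n - 1)) / n.factorial :=
    Summable.of_norm_bounded hu_sum fun n => hbound n x hxR
  have heq : (∑' n : ℕ, b n * ((n : ℝ) * x ^ (n - 1)) / n.factorial) =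
      ∑' n : ℕ, b (n + 1) * x ^ n / n.factorial := by
    rw [Summable.tsum_eq_zero_add hsum']
    simp only [Nat.cast_zero, zero_mul, mul_zero, zero_div, zero_add]
    congr 1
    funext n
    rw [Nat.add_sub_cancel, Nat.factorial_succ]
    push_cast
    field_simp
  rwa [heq] at H

lemma qN_le_one {ℓ : ℝ} (hℓ : 0 < ℓ) (r : ℝ) (N : ℕ) : qN ℓ r N ≤ 1 := by
  haveI := unif_prob hℓ
  exact prob_le_one

lemma qplusN_le_one {ℓ : ℝ} (hℓ : 0 < ℓ) (r : ℝ) (N : ℕ) : qplusN ℓ r N ≤ 1 := by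
  haveI := unif_prob hℓ
  exact prob_le_one

theorem stmt_8' (ℓ r lam : ℝ) (hℓ : 0 < ℓ) (hr : 0 < r) (hlam : 0 ≤ lam) :
    HasDerivWithinAt (fun l => (∑' N : ℕ, Real.exp (-(l * ℓ)) * (l * ℓ) ^ N /
        (Nat.factorial N) * (qN ℓ r N).toReal))
      (ℓ * ∑' N : ℕ, Real.exp (-(lam * ℓ)) * (lam * ℓ) ^ N / (Nat.factorial N) *
        (qplusN ℓ r N).toReal)
      (Set.Ici 0) lam := by
  set b : ℕ → ℝ := fun N => (qN ℓ r N).toReal with hbdef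
  have hb1 : ∀ N, |b N| ≤ 1 := by
    intro N
    rw [abs_of_nonneg ENNReal.toReal_nonneg]
    have := ENNReal.toReal_mono (by simp) (qN_le_one hℓ r N)
    simpa using this
  have hq_ne : ∀ N, qN ℓ r N ≠ ⊤ := fun N =>
    ((qN_le_one hℓ r N).trans_lt ENNReal.one_lt_top).ne
  have hqp_ne : ∀ N, qplusN ℓ r N ≠ ⊤ := fun N =>
    ((qplusN_le_one hℓ r N).trans_lt ENNReal.one_lt_top).ne
  have hbsucc : ∀ N, (qplusN ℓ r N).toReal = b (N + 1) - b N := by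
    intro N
    rw [hbdef]
    simp only
    rw [qN_succ r hℓ N, ENNReal.toReal_add (hq_ne N) (hqp_ne N)]
    ring
  set g : ℝ → ℝ := fun y => ∑' N : ℕ, b N * y ^ N / N.factorial with hgdef
  have hpcov : ∀ l : ℝ, (∑' N : ℕ, Real.exp (-(l * ℓ)) * (l * ℓ) ^ N /
      (Nat.factorial N) * (qN ℓ r N).toReal) = Real.exp (-(l * ℓ)) * g (l * ℓ) := by
    intro l
    rw [hgdef]
    simp only
    rw [← tsum_mul_left]
    congr 1
    funext N
    ring
  have hG := g_hasDerivAt b hb1 (lam * ℓ)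
  have h1 : HasDerivAt (fun l : ℝ => l * ℓ) ℓ lam := by
    simpa using (hasDerivAt_id lam).mul_const ℓ
  have h2 : HasDerivAt (fun l : ℝ => g (l * ℓ))
      ((∑' N : ℕ, b (N + 1) * (lam * ℓ) ^ N / N.factorial) * ℓ) lam := by have := hG.comp lam h1; exact this
  have h3 : HasDerivAt (fun l : ℝ => Real.exp (-(l * ℓ)))
      (Real.exp (-(lam * ℓ)) * -ℓ) lam := by
    have hneg : HasDerivAt (fun l : ℝ => -(l * ℓ)) (-ℓ) lam := h1.neg
    exact (Real.hasDerivAt_exp (-(lam * ℓ))).comp lam hneg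
  have h4 := h3.mul h2
  have hfun : (fun l : ℝ => (∑' N : ℕ, Real.exp (-(l * ℓ)) * (l * ℓ) ^ N /
      (Nat.factorial N) * (qN ℓ r N).toReal)) =
      fun l : ℝ => Real.exp (-(l * ℓ)) * g (l * ℓ) := funext hpcov
  rw [hfun]
  have hderiv_eq : Real.exp (-(lam * ℓ)) * -ℓ * g (lam * ℓ) +
      Real.exp (-(lam * ℓ)) * ((∑' N : ℕ, b (N + 1) * (lam * ℓ) ^ N / N.factorial) * ℓ) =
      ℓ * ∑' N : ℕ, Real.exp (-(lam * ℓ)) * (lam * ℓ) ^ N / (Nat.factorial N) *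
        (qplusN ℓ r N).toReal := by
    have hsum1 : Summable fun N : ℕ => b (N + 1) * (lam * ℓ) ^ N / N.factorial :=
      summable_bxn (fun N => b (N + 1)) (fun N => hb1 (N + 1)) _
    have hsum2 : Summable fun N : ℕ => b N * (lam * ℓ) ^ N / N.factorial :=
      summable_bxn b hb1 _
    have hrhs : (∑' N : ℕ, Real.exp (-(lam * ℓ)) * (lam * ℓ) ^ N / (Nat.factorial N) *
        (qplusN ℓ r N).toReal) = Real.exp (-(lam * ℓ)) *
        ((∑' N : ℕ, b (N + 1) * (lam * ℓ) ^ N / N.factorial) -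
          ∑' N : ℕ, b N * (lam * ℓ) ^ N / N.factorial) := by
      rw [← Summable.tsum_sub hsum1 hsum2, ← tsum_mul_left]
      congr 1
      funext N
      rw [hbsucc N]
      ring
    rw [hrhs, hgdef]
    ring
  rw [← hderiv_eq]
  exact h4.hasDerivWithinAt

/-- For every `ℓ > 0`, `r > 0` and `λ ≥ 0` (right derivative at `λ = 0`), the partial
derivative of `p` with respect to `λ` is
`∂_λ p(ℓ,λ,r) = ℓ · Σ_N e^{−λℓ}(λℓ)^N/N! · P([0,ℓ] ⊄ C_N and [0,ℓ] ⊆ C_N ∪ [U ± (r/2)ℰ])`. -/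
theorem stmt_8 (ℓ r lam : ℝ) (hℓ : 0 < ℓ) (hr : 0 < r) (hlam : 0 ≤ lam) :
    HasDerivWithinAt (fun l => pcov ℓ l r)
      (ℓ * ∑' N : ℕ, Real.exp (-(lam * ℓ)) * (lam * ℓ) ^ N / (Nat.factorial N) *
        (qplusN ℓ r N).toReal)
      (Set.Ici 0) lam := by
  exact stmt_8' ℓ r lam hℓ hr hlam
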